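/- Let K be a field and let L be the 2-dimensional nonabelian Lie algebra over K, with basis x, y satisfying ⁅x, y⁆ = x. A K-linear map ψ : L → L satisfies ⁅⁅a, b⁆, ψ(c)⁆ = 0 for all a, b, c ∈ L if and only if the image of ψ is contained in the line K·x, i.e., for every w ∈ L there exists c ∈ K with ψ(w) = c·x. -/

import Mathlib

/-- On the 2-dimensional nonabelian Lie algebra (basis `x, y` with
`⁅x, y⁆ = x`), a linear map `ψ` is Hom-2-nilpotent (`⁅⁅a,b⁆, ψ c⁆ = 0` for all `a, b, c`)
iff its image is contained in the line `K·x`. -/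
theorem hom2Nilpotent_two_dim_nonabelian (K L : Type*) [Field K] [LieRing L] [LieAlgebra K L]
    (B : Module.Basis (Fin 2) K L) (x y : L)
    (hB0 : B 0 = x) (hB1 : B 1 = y)
    (hxy : ⁅x, y⁆ = x)
    (ψ : L →ₗ[K] L) :
    (∀ a b c : L, ⁅⁅a, b⁆, ψ c⁆ = 0) ↔ ∀ w : L, ∃ c : K, ψ w = c • x := by
  have hdecomp : ∀ v : L, v = B.repr v 0 • x + B.repr v 1 • y := by
    intro v
    conv_lhs => rw [← B.sum_repr v]
    rw [Fin.sum_univ_two, hB0, hB1]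
  have hx0 : x ≠ 0 := by rw [← hB0]; exact B.ne_zero 0
  have hlie : ∀ v : L, ⁅x, v⁆ = B.repr v 1 • x := by
    intro v
    conv_lhs => rw [hdecomp v]
    simp [lie_add, lie_smul, lie_self, hxy]
  constructor
  · intro h w
    have h1 : ⁅x, ψ w⁆ = 0 := by
      have := h x y w
      rwa [hxy] at this
    rw [hlie] at h1
    have h2 : B.repr (ψ w) 1 = 0 := by
      rcases smul_eq_zero.mp h1 with h | h
      · exact h
      · exact absurd h hx0
    exact ⟨B.repr (ψ w) 0, by conv_lhs => rw [hdecomp (ψ w), h2, zero_smul, add_zero]⟩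
  · intro h a b c
    obtain ⟨d, hd⟩ := h c
    have hab : ⁅a, b⁆ = (B.repr a 0 * B.repr b 1 - B.repr a 1 * B.repr b 0) • x := by
      conv_lhs => rw [hdecomp a, hdecomp b]
      have hyx : ⁅y, x⁆ = -x := by rw [← lie_skew, hxy]
      simp only [lie_add, add_lie, lie_smul, smul_lie, lie_self, smul_zero, hxy, hyx]
      module
    rw [hd, hab]
    simp [lie_self]
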